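/- The function h(x) = x·(1 - e^{-(1-x)})/(1-x) - 2·(e^x - 1)/e is strictly decreasing on [0,1). In particular its derivative (e - e^x·(x² - 3x + 3))/(e·(1-x)²) is negative for all 0 ≤ x < 1. -/

import Mathlib

open Real

lemma key_ineq : ∀ x : ℝ, 0 ≤ x → x < 1 →
    Real.exp 1 < Real.exp x * (x ^ 2 - 3 * x + 3) := by
  intro x hx hx1
  have hg : StrictAntiOn (fun x : ℝ => Real.exp x * (x ^ 2 - 3 * x + 3))
      (Set.Icc (0 : ℝ) 1) := by
    apply strictAntiOn_of_deriv_neg (convex_Icc 0 1) (by fun_prop)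
    intro y hy
    rw [interior_Icc] at hy
    have hp : HasDerivAt (fun x : ℝ => x ^ 2 - 3 * x + 3) (2 * y - 3) y := by
      have := (((hasDerivAt_pow 2 y).sub ((hasDerivAt_id y).const_mul 3)).add_const 3)
      simpa using this
    have hD : HasDerivAt (fun x : ℝ => Real.exp x * (x ^ 2 - 3 * x + 3))
        (Real.exp y * (y ^ 2 - 3 * y + 3) + Real.exp y * (2 * y - 3)) y :=
      (Real.hasDerivAt_exp y).mul hp
    rw [hD.deriv]
    nlinarith [mul_pos (mul_pos (Real.exp_pos y) hy.1) (sub_pos.mpr hy.2)]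
  have h := hg (Set.mem_Icc.mpr ⟨hx, le_of_lt hx1⟩) (Set.mem_Icc.mpr ⟨by norm_num, le_refl 1⟩) hx1
  simpa using h

theorem stmt_6 :
    StrictAntiOn
      (fun x : ℝ => x * (1 - Real.exp (-(1 - x))) / (1 - x)
        - 2 * (Real.exp x - 1) / Real.exp 1)
      (Set.Ico (0 : ℝ) 1) ∧
    ∀ x : ℝ, 0 ≤ x → x < 1 →
      (Real.exp 1 - Real.exp x * (x ^ 2 - 3 * x + 3))
        / (Real.exp 1 * (1 - x) ^ 2) < 0 := by
  constructor
  · apply strictAntiOn_of_deriv_neg (convex_Ico 0 1)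
    · apply ContinuousOn.sub
      · apply ContinuousOn.div (by fun_prop) (by fun_prop)
        intro x hx
        exact sub_ne_zero.mpr (Ne.symm (ne_of_lt hx.2))
      · fun_prop
    · intro y hy
      rw [interior_Ico] at hy
      have h1y : (0:ℝ) < 1 - y := by linarith [hy.2]
      have hne : (1:ℝ) - y ≠ 0 := ne_of_gt h1y
      have hinner : HasDerivAt (fun x : ℝ => -(1 - x)) 1 y := by
        have : HasDerivAt (fun x : ℝ => -(1 - x)) (-(-1)) y := ((hasDerivAt_id' y).const_sub (1:ℝ)).neg
        simpa using this
      have hE : HasDerivAt (fun x : ℝ => Real.exp (-(1 - x)))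
          (Real.exp (-(1 - y)) * 1) y := by
        simpa using hinner.exp
      have h1 : HasDerivAt (fun x : ℝ => 1 - Real.exp (-(1 - x)))
          (-(Real.exp (-(1 - y)) * 1)) y := hE.const_sub 1
      have hn : HasDerivAt (fun x : ℝ => x * (1 - Real.exp (-(1 - x))))
          (1 * (1 - Real.exp (-(1 - y))) + y * (-(Real.exp (-(1 - y)) * 1))) y :=
        (hasDerivAt_id y).mul h1
      have hd : HasDerivAt (fun x : ℝ => 1 - x) (-1) y := by
        have := (hasDerivAt_id' y).const_sub (1:ℝ)
        simpa using this
      have hq := hn.div hd hne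
      have hr : HasDerivAt (fun x : ℝ => 2 * (Real.exp x - 1) / Real.exp 1)
          (2 * Real.exp y / Real.exp 1) y :=
        (((Real.hasDerivAt_exp y).sub_const 1).const_mul 2).div_const (Real.exp 1)
      have hf := hq.sub hr
      have hf' : HasDerivAt (fun x : ℝ => x * (1 - Real.exp (-(1 - x))) / (1 - x) - 2 * (Real.exp x - 1) / Real.exp 1) _ y := hf
      rw [hf'.deriv]
      have hEe : Real.exp (-(1 - y)) * Real.exp 1 = Real.exp y := by
        rw [← Real.exp_add]; ring_nf
      have hkey := key_ineq y (le_of_lt hy.1) hy.2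
      rw [sub_neg, div_lt_div_iff₀ (by positivity) (Real.exp_pos 1)]
      nlinarith [hEe, hkey, Real.exp_pos y, Real.exp_pos 1]
  · intro x hx hx1
    have h1y : (0:ℝ) < 1 - x := by linarith
    have := key_ineq x hx hx1
    apply div_neg_of_neg_of_pos
    · linarith
    · positivity
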